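/- arXiv:1704.03112 — 4 statements merged into one kernel-verified Lean document; each statement's English description precedes it below -/
import Mathlib

section
/- For every orientation-preserving homeomorphism f of the closed interval [0,1] and every positive integer n, there exists an orientation-preserving homeomorphism g of [0,1] such that g^n = f. -/
theorem Equiv.Perm.apply_inv_self {α : Type*} (f : Equiv.Perm α) (x : α) : f (f⁻¹ x) = x :=
  f.apply_symm_apply x

theorem Equiv.Perm.inv_apply_self {α : Type*} (f : Equiv.Perm α) (x : α) : f⁻¹ (f x) = x :=
  f.symm_apply_apply x

namespace NthRootAux

open Set

variable {F : Equiv.Perm ℝ}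

lemma inv_strictMono (hF : StrictMono ⇑F) : StrictMono ⇑F⁻¹ := by
  intro a b hab
  by_contra h
  push_neg at h
  have h2 := hF.monotone h
  simp only [Equiv.Perm.apply_inv_self] at h2
  exact absurd h2 (not_le.2 hab)

lemma zpow_strictMono (hF : StrictMono ⇑F) : ∀ k : ℤ, StrictMono ⇑(F ^ k) := by
  intro k
  induction k using Int.induction_on with
  | zero => simpa using strictMono_id
  | succ k ih =>
    intro a b hab
    rw [zpow_add_one, Equiv.Perm.mul_apply, Equiv.Perm.mul_apply]
    exact ih (hF hab)
  | pred k ih =>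
    intro a b hab
    rw [zpow_sub_one, Equiv.Perm.mul_apply, Equiv.Perm.mul_apply]
    exact ih (inv_strictMono hF hab)

lemma perm_map_csSup (hF : StrictMono ⇑F) {s : Set ℝ} (h1 : s.Nonempty) (h2 : BddAbove s) :
    F (sSup s) = sSup (⇑F '' s) := by
  have := (StrictMono.orderIsoOfSurjective ⇑F hF F.surjective).map_csSup' h1 h2
  simpa using this

lemma perm_map_csInf (hF : StrictMono ⇑F) {s : Set ℝ} (h1 : s.Nonempty) (h2 : BddBelow s) :
    F (sInf s) = sInf (⇑F '' s) := by
  have := (StrictMono.orderIsoOfSurjective ⇑F hF F.surjective).map_csInf' h1 h2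
  simpa using this

lemma zpow_zpow (a b : ℤ) (z : ℝ) : (F ^ a) ((F ^ b) z) = (F ^ (a + b)) z := by
  rw [← Equiv.Perm.mul_apply, ← zpow_add]

lemma F_zpow (k : ℤ) (z : ℝ) : F ((F ^ k) z) = (F ^ (k + 1)) z := by
  have : F ((F ^ k) z) = (F ^ (1:ℤ)) ((F ^ k) z) := by rw [zpow_one]
  rw [this, zpow_zpow, add_comm]

lemma zpow_neg_apply (k : ℤ) (z : ℝ) : (F ^ (-k)) ((F ^ k) z) = z := by
  rw [zpow_zpow, neg_add_cancel, zpow_zero, Equiv.Perm.coe_one, id_eq]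

/-! ### Band (component) machinery -/

noncomputable def AA (F : Equiv.Perm ℝ) (x : ℝ) : ℝ := sSup ({y | F y = y} ∩ Iic x)

noncomputable def BB (F : Equiv.Perm ℝ) (x : ℝ) : ℝ := sInf ({y | F y = y} ∩ Ici x)

variable (hfix : ∀ x, x ∉ Set.Ioo (0:ℝ) 1 → F x = x)
include hfix

lemma Aset_nonempty (x : ℝ) : ({y | F y = y} ∩ Iic x).Nonempty :=
  ⟨min x 0, hfix _ (fun h => absurd h.1 (not_lt.2 (min_le_right x 0))), min_le_left x 0⟩

lemma Bset_nonempty (x : ℝ) : ({y | F y = y} ∩ Ici x).Nonempty :=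
  ⟨max x 1, hfix _ (fun h => absurd h.2 (not_lt.2 (le_max_right x 1))), le_max_left x 1⟩

omit hfix in
lemma Aset_bdd (x : ℝ) : BddAbove ({y : ℝ | F y = y} ∩ Iic x) := ⟨x, fun _ hy => hy.2⟩

omit hfix in
lemma Bset_bdd (x : ℝ) : BddBelow ({y : ℝ | F y = y} ∩ Ici x) := ⟨x, fun _ hy => hy.2⟩

lemma A_mem (hF : StrictMono ⇑F) (x : ℝ) : F (AA F x) = AA F x := by
  have himg : ⇑F '' ({y | F y = y} ∩ Iic x) = ({y | F y = y} ∩ Iic x) := by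
    ext z
    simp only [mem_image]
    constructor
    · rintro ⟨w, hw, rfl⟩
      rwa [hw.1]
    · intro hz
      exact ⟨z, hz, hz.1⟩
  rw [AA, perm_map_csSup hF (Aset_nonempty hfix x) (Aset_bdd x), himg]

lemma B_mem (hF : StrictMono ⇑F) (x : ℝ) : F (BB F x) = BB F x := by
  have himg : ⇑F '' ({y | F y = y} ∩ Ici x) = ({y | F y = y} ∩ Ici x) := by
    ext z
    simp only [mem_image]
    constructor
    · rintro ⟨w, hw, rfl⟩
      rwa [hw.1]
    · intro hz
      exact ⟨z, hz, hz.1⟩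
  rw [BB, perm_map_csInf hF (Bset_nonempty hfix x) (Bset_bdd x), himg]

lemma A_le (x : ℝ) : AA F x ≤ x := csSup_le (Aset_nonempty hfix x) fun _ hy => hy.2

lemma le_B (x : ℝ) : x ≤ BB F x := le_csInf (Bset_nonempty hfix x) fun _ hy => hy.2

lemma A_lt (hF : StrictMono ⇑F) {x : ℝ} (hx : F x ≠ x) : AA F x < x :=
  (A_le hfix x).lt_of_ne fun h => hx (by rw [← h]; exact A_mem hfix hF x)

lemma lt_B (hF : StrictMono ⇑F) {x : ℝ} (hx : F x ≠ x) : x < BB F x :=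
  (le_B hfix x).lt_of_ne fun h => hx (by rw [h]; exact B_mem hfix hF x)

lemma band_not_fixed {x y : ℝ} (hy1 : AA F x < y) (hy2 : y < BB F x) : F y ≠ y := by
  intro h
  rcases le_total y x with hle | hle
  · exact absurd (le_csSup (Aset_bdd x) ⟨h, hle⟩) (not_le.2 hy1)
  · exact absurd (csInf_le (Bset_bdd x) ⟨h, hle⟩) (not_le.2 hy2)

lemma band_eq (hF : StrictMono ⇑F) {x y : ℝ} (hy1 : AA F x < y) (hy2 : y < BB F x) :
    AA F y = AA F x ∧ BB F y = BB F x := by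
  constructor
  · apply le_antisymm
    · by_contra h
      push_neg at h
      exact band_not_fixed hfix h (lt_of_le_of_lt (A_le hfix y) hy2) (A_mem hfix hF y)
    · exact le_csSup (Aset_bdd y) ⟨A_mem hfix hF x, hy1.le⟩
  · apply le_antisymm
    · exact csInf_le (Bset_bdd y) ⟨B_mem hfix hF x, hy2.le⟩
    · by_contra h
      push_neg at h
      exact band_not_fixed hfix (lt_of_lt_of_le hy1 (le_B hfix y)) h (B_mem hfix hF y)

lemma Finv_A (hF : StrictMono ⇑F) (x : ℝ) : F⁻¹ (AA F x) = AA F x := by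
  have := congrArg ⇑F⁻¹ (A_mem hfix hF x)
  rw [Equiv.Perm.inv_apply_self] at this
  exact this.symm

lemma Finv_B (hF : StrictMono ⇑F) (x : ℝ) : F⁻¹ (BB F x) = BB F x := by
  have := congrArg ⇑F⁻¹ (B_mem hfix hF x)
  rw [Equiv.Perm.inv_apply_self] at this
  exact this.symm

lemma F_band (hF : StrictMono ⇑F) {x y : ℝ} (hy1 : AA F x < y) (hy2 : y < BB F x) :
    AA F x < F y ∧ F y < BB F x := by
  constructor
  · have := hF hy1
    rwa [A_mem hfix hF x] at this
  · have := hF hy2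
    rwa [B_mem hfix hF x] at this

lemma Finv_band (hF : StrictMono ⇑F) {x y : ℝ} (hy1 : AA F x < y) (hy2 : y < BB F x) :
    AA F x < F⁻¹ y ∧ F⁻¹ y < BB F x := by
  constructor
  · have := inv_strictMono hF hy1
    rwa [Finv_A hfix hF x] at this
  · have := inv_strictMono hF hy2
    rwa [Finv_B hfix hF x] at this

lemma zpow_band (hF : StrictMono ⇑F) (k : ℤ) :
    ∀ y : ℝ, ∀ x : ℝ, AA F x < y → y < BB F x → AA F x < (F ^ k) y ∧ (F ^ k) y < BB F x := by
  induction k using Int.induction_on with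
  | zero => intro y x h1 h2; simpa using ⟨h1, h2⟩
  | succ k ih =>
    intro y x h1 h2
    have hy' := F_band hfix hF h1 h2
    have := ih (F y) x hy'.1 hy'.2
    rwa [zpow_add_one, Equiv.Perm.mul_apply]
  | pred k ih =>
    intro y x h1 h2
    have hy' := Finv_band hfix hF h1 h2
    have := ih (F⁻¹ y) x hy'.1 hy'.2
    rwa [zpow_sub_one, Equiv.Perm.mul_apply]


/-! ### The positive case construction -/

noncomputable def cc (F : Equiv.Perm ℝ) (x : ℝ) : ℝ := (AA F x + BB F x) / 2

noncomputable def dd (F : Equiv.Perm ℝ) (x : ℝ) : ℝ := F (cc F x) - cc F x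

noncomputable def tau (F : Equiv.Perm ℝ) (x : ℝ) : ℤ := sSup {k : ℤ | (F ^ k) (cc F x) ≤ x}

noncomputable def uu (F : Equiv.Perm ℝ) (x : ℝ) : ℝ :=
  ((F ^ (-(tau F x))) x - cc F x) / dd F x

noncomputable def phi (F : Equiv.Perm ℝ) (x : ℝ) : ℝ := tau F x + uu F x

noncomputable def theta (F : Equiv.Perm ℝ) (x r : ℝ) : ℝ :=
  (F ^ ⌊r⌋) (cc F x + Int.fract r * dd F x)

noncomputable def gg (F : Equiv.Perm ℝ) (n : ℕ) (x : ℝ) : ℝ :=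
  if F x = x then x else theta F x (phi F x + 1 / n)

variable (hF : StrictMono ⇑F) (hpos : ∀ x, x ≤ F x)
include hF

lemma cc_band {x : ℝ} (hx : F x ≠ x) : AA F x < cc F x ∧ cc F x < BB F x := by
  have h1 := A_lt hfix hF hx
  have h2 := lt_B hfix hF hx
  constructor <;> (rw [cc]; linarith)

include hpos

omit hfix hF in
lemma pos_of_not_fixed {y : ℝ} (hy : F y ≠ y) : y < F y := (hpos y).lt_of_ne (Ne.symm hy)

lemma dd_pos {x : ℝ} (hx : F x ≠ x) : 0 < dd F x := by
  have h := cc_band hfix hF hx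
  have := pos_of_not_fixed hpos (band_not_fixed hfix h.1 h.2)
  rw [dd]; linarith

lemma orbit_strictMono {x : ℝ} (hx : F x ≠ x) :
    StrictMono (fun k : ℤ => (F ^ k) (cc F x)) := by
  apply strictMono_int_of_lt_succ
  intro k
  have h := cc_band hfix hF hx
  have hc := pos_of_not_fixed hpos (band_not_fixed hfix h.1 h.2)
  have h2 := (zpow_strictMono hF k) hc
  have h3 : (F ^ k) (F (cc F x)) = (F ^ (k + 1)) (cc F x) := by
    rw [show F (cc F x) = (F ^ (1:ℤ)) (cc F x) by rw [zpow_one], zpow_zpow]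
  rw [h3] at h2
  exact h2

lemma orbit_band {x : ℝ} (hx : F x ≠ x) (k : ℤ) :
    AA F x < (F ^ k) (cc F x) ∧ (F ^ k) (cc F x) < BB F x := by
  have h := cc_band hfix hF hx
  exact zpow_band hfix hF k _ x h.1 h.2

lemma exists_orbit_lt {x : ℝ} (hx : F x ≠ x) : ∃ m : ℕ, (F ^ (-(m:ℤ))) (cc F x) < x := by
  by_contra hcon
  push_neg at hcon
  set o : ℤ → ℝ := fun k => (F ^ k) (cc F x) with ho
  set T := Set.range fun m : ℕ => o (-(m:ℤ)) with hT
  have hTne : T.Nonempty := ⟨o 0, 0, by simp [ho]⟩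
  have hTbdd : BddBelow T := ⟨x, by rintro z ⟨m, rfl⟩; exact hcon m⟩
  have hbdd' : BddBelow (⇑F '' T) := ⟨x, by rintro z ⟨t, ⟨m, rfl⟩, rfl⟩; exact (hcon m).trans (hpos _)⟩
  have hFl : F (sInf T) = sInf T := by
    rw [perm_map_csInf hF hTne hTbdd]
    apply le_antisymm
    · apply le_csInf hTne
      rintro z ⟨m, rfl⟩
      have heq : F (o (-((m:ℤ) + 1))) = o (-(m:ℤ)) := by
        have harith : (-((m:ℤ) + 1) + 1) = -(m:ℤ) := by ring
        rw [ho]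
        rw [F_zpow, harith]
      have hmem2 : o (-((m:ℤ)+1)) ∈ T := ⟨m + 1, by congr 1 <;> omega⟩
      have hmem : o (-(m:ℤ)) ∈ ⇑F '' T := ⟨o (-((m:ℤ)+1)), hmem2, heq⟩
      exact csInf_le hbdd' hmem
    · apply le_csInf (hTne.image _)
      rintro z ⟨t, ht, rfl⟩
      exact (csInf_le hTbdd ht).trans (hpos t)
  have hxl : x ≤ sInf T := le_csInf hTne (by rintro z ⟨m, rfl⟩; exact hcon m)
  have hc0 : cc F x ∈ T := ⟨0, by simp [ho]⟩
  have hlc : sInf T ≤ cc F x := csInf_le hTbdd hc0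
  exact band_not_fixed hfix (lt_of_lt_of_le (A_lt hfix hF hx) hxl)
    (lt_of_le_of_lt hlc (cc_band hfix hF hx).2) hFl

lemma exists_orbit_gt {x : ℝ} (hx : F x ≠ x) : ∃ m : ℕ, x < (F ^ (m:ℤ)) (cc F x) := by
  by_contra hcon
  push_neg at hcon
  set o : ℤ → ℝ := fun k => (F ^ k) (cc F x) with ho
  set T := Set.range fun m : ℕ => o (m:ℤ) with hT
  have hTne : T.Nonempty := ⟨o 0, 0, by simp [ho]⟩
  have hTbdd : BddAbove T := ⟨x, by rintro z ⟨m, rfl⟩; exact hcon m⟩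
  have hbdd' : BddAbove (⇑F '' T) := by
    refine ⟨x, ?_⟩
    rintro z ⟨t, ⟨m, rfl⟩, rfl⟩
    have heq : F (o (m:ℤ)) = o ((m:ℤ) + 1) := by rw [ho, F_zpow]
    rw [heq]
    have : o ((m:ℤ)+1) = o ((m+1 : ℕ) : ℤ) := by congr 1 <;> omega
    rw [this]
    exact hcon (m+1)
  have hFl : F (sSup T) = sSup T := by
    rw [perm_map_csSup hF hTne hTbdd]
    apply le_antisymm
    · apply csSup_le (hTne.image _)
      rintro z ⟨t, ⟨m, rfl⟩, rfl⟩
      have heq : F (o (m:ℤ)) = o ((m+1 : ℕ) : ℤ) := by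
        rw [ho, F_zpow]
        congr 1 <;> omega
      rw [heq]
      exact le_csSup hTbdd ⟨m+1, rfl⟩
    · apply csSup_le hTne
      rintro t ht
      exact (hpos t).trans (le_csSup hbdd' ⟨t, ht, rfl⟩)
  have hxl : sSup T ≤ x := csSup_le hTne (by rintro z ⟨m, rfl⟩; exact hcon m)
  have hc0 : cc F x ∈ T := ⟨0, by simp [ho]⟩
  have hlc : cc F x ≤ sSup T := le_csSup hTbdd hc0
  exact band_not_fixed hfix (lt_of_lt_of_le (cc_band hfix hF hx).1 hlc)
    (lt_of_le_of_lt hxl (lt_B hfix hF hx)) hFl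


lemma tau_mem_and_spec {x : ℝ} (hx : F x ≠ x) :
    (F ^ tau F x) (cc F x) ≤ x ∧ x < (F ^ (tau F x + 1)) (cc F x) := by
  set K := {k : ℤ | (F ^ k) (cc F x) ≤ x} with hK
  obtain ⟨m₁, hm₁⟩ := exists_orbit_lt hfix hF hpos hx
  obtain ⟨m₂, hm₂⟩ := exists_orbit_gt hfix hF hpos hx
  have hKne : K.Nonempty := ⟨-(m₁:ℤ), hm₁.le⟩
  have hKbdd : BddAbove K := by
    refine ⟨(m₂:ℤ), fun k hk => ?_⟩
    by_contra hcon
    push_neg at hcon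
    have := (orbit_strictMono hfix hF hpos hx).monotone hcon.le
    exact absurd (lt_of_lt_of_le hm₂ (this.trans hk)) (lt_irrefl x)
  have hmem : tau F x ∈ K := Int.csSup_mem hKne hKbdd
  refine ⟨hmem, ?_⟩
  by_contra hcon
  push_neg at hcon
  have : tau F x + 1 ≤ tau F x := le_csSup hKbdd hcon
  omega

lemma tau_unique {x : ℝ} (hx : F x ≠ x) (k : ℤ)
    (h1 : (F ^ k) (cc F x) ≤ x) (h2 : x < (F ^ (k + 1)) (cc F x)) : tau F x = k := by
  obtain ⟨hs1, hs2⟩ := tau_mem_and_spec hfix hF hpos hx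
  have hmono := orbit_strictMono hfix hF hpos hx
  by_contra hne
  rcases lt_or_gt_of_ne hne with h | h
  · have : tau F x + 1 ≤ k := by omega
    exact absurd (lt_of_le_of_lt h1 hs2) (not_lt.2 (hmono.monotone this))
  · have : k + 1 ≤ tau F x := by omega
    exact absurd (lt_of_le_of_lt hs1 h2) (not_lt.2 (hmono.monotone this))

lemma Fnegtau_mem {x : ℝ} (hx : F x ≠ x) :
    cc F x ≤ (F ^ (-(tau F x))) x ∧ (F ^ (-(tau F x))) x < F (cc F x) := by
  obtain ⟨h1, h2⟩ := tau_mem_and_spec hfix hF hpos hx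
  constructor
  · have := (zpow_strictMono hF (-(tau F x))).monotone h1
    rwa [zpow_neg_apply] at this
  · have := (zpow_strictMono hF (-(tau F x))) h2
    have heq : (F ^ (-tau F x)) ((F ^ (tau F x + 1)) (cc F x)) = F (cc F x) := by
      rw [zpow_zpow]
      have : -tau F x + (tau F x + 1) = 1 := by ring
      rw [this, zpow_one]
    rwa [heq] at this

lemma uu_mem {x : ℝ} (hx : F x ≠ x) : uu F x ∈ Ico (0:ℝ) 1 := by
  obtain ⟨h1, h2⟩ := Fnegtau_mem hfix hF hpos hx
  have hd := dd_pos hfix hF hpos hx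
  constructor
  · exact div_nonneg (by linarith) hd.le
  · rw [uu, div_lt_one hd, dd]
    linarith

lemma key_eq {x : ℝ} (hx : F x ≠ x) :
    cc F x + uu F x * dd F x = (F ^ (-(tau F x))) x := by
  have hd := (dd_pos hfix hF hpos hx).ne'
  rw [uu, div_mul_cancel₀ _ hd]
  ring

lemma floor_phi {x : ℝ} (hx : F x ≠ x) : ⌊phi F x⌋ = tau F x := by
  rw [phi, Int.floor_intCast_add]
  rw [Int.floor_eq_zero_iff.2 (uu_mem hfix hF hpos hx)]
  ring

lemma fract_phi {x : ℝ} (hx : F x ≠ x) : Int.fract (phi F x) = uu F x := by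
  rw [phi, Int.fract_intCast_add, Int.fract_eq_self.2 ?_]
  · exact uu_mem hfix hF hpos hx

lemma theta_bounds {x : ℝ} (hx : F x ≠ x) (r : ℝ) :
    (F ^ ⌊r⌋) (cc F x) ≤ theta F x r ∧ theta F x r < (F ^ (⌊r⌋ + 1)) (cc F x) := by
  have hd := dd_pos hfix hF hpos hx
  have hp1 : cc F x ≤ cc F x + Int.fract r * dd F x :=
    le_add_of_nonneg_right (mul_nonneg (Int.fract_nonneg r) hd.le)
  have hp2 : cc F x + Int.fract r * dd F x < F (cc F x) := by
    have := Int.fract_lt_one r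
    rw [dd] at hd ⊢
    nlinarith
  constructor
  · exact (zpow_strictMono hF ⌊r⌋).monotone hp1
  · have := (zpow_strictMono hF ⌊r⌋) hp2
    have heq : (F ^ ⌊r⌋) (F (cc F x)) = (F ^ (⌊r⌋ + 1)) (cc F x) := by
      rw [show F (cc F x) = (F ^ (1:ℤ)) (cc F x) by rw [zpow_one], zpow_zpow]
    rwa [heq] at this

lemma theta_mem_band {x : ℝ} (hx : F x ≠ x) (r : ℝ) :
    AA F x < theta F x r ∧ theta F x r < BB F x := by
  obtain ⟨h1, h2⟩ := theta_bounds hfix hF hpos hx r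
  exact ⟨lt_of_lt_of_le (orbit_band hfix hF hpos hx ⌊r⌋).1 h1,
    lt_trans h2 (orbit_band hfix hF hpos hx (⌊r⌋+1)).2⟩

lemma theta_strictMono {x : ℝ} (hx : F x ≠ x) : StrictMono (theta F x) := by
  intro r r' hrr
  have hd := dd_pos hfix hF hpos hx
  rcases eq_or_lt_of_le (Int.floor_mono hrr.le) with hfl | hfl
  · have hfr : Int.fract r < Int.fract r' := by
      rw [Int.fract, Int.fract, ← hfl]
      linarith
    rw [theta, theta, ← hfl]
    exact (zpow_strictMono hF ⌊r⌋) (by nlinarith)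
  · calc theta F x r < (F ^ (⌊r⌋ + 1)) (cc F x) := (theta_bounds hfix hF hpos hx r).2
      _ ≤ (F ^ ⌊r'⌋) (cc F x) := (orbit_strictMono hfix hF hpos hx).monotone (by omega)
      _ ≤ theta F x r' := (theta_bounds hfix hF hpos hx r').1

lemma theta_phi {x : ℝ} (hx : F x ≠ x) : theta F x (phi F x) = x := by
  rw [theta, floor_phi hfix hF hpos hx, fract_phi hfix hF hpos hx,
    key_eq hfix hF hpos hx, zpow_zpow]
  have : tau F x + -tau F x = 0 := by ring
  rw [this, zpow_zero, Equiv.Perm.coe_one, id_eq]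

lemma band_data_eq {x y : ℝ} (hx : F x ≠ x) (hy1 : AA F x < y) (hy2 : y < BB F x) :
    cc F y = cc F x ∧ dd F y = dd F x := by
  obtain ⟨hA, hB⟩ := band_eq hfix hF hy1 hy2
  have hc : cc F y = cc F x := by rw [cc, cc, hA, hB]
  exact ⟨hc, by rw [dd, dd, hc]⟩

omit hfix hF hpos in
lemma theta_congr {x y : ℝ} (hc : cc F y = cc F x) (hd : dd F y = dd F x) :
    theta F y = theta F x := by
  funext r
  rw [theta, theta, hc, hd]

lemma phi_theta {x : ℝ} (hx : F x ≠ x) (r : ℝ) : phi F (theta F x r) = r := by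
  set y := theta F x r with hy
  obtain ⟨hb1, hb2⟩ := theta_mem_band hfix hF hpos hx r
  have hyx : F y ≠ y := band_not_fixed hfix hb1 hb2
  obtain ⟨hceq, hdeq⟩ := band_data_eq hfix hF hpos hx hb1 hb2
  have htau : tau F y = ⌊r⌋ := by
    apply tau_unique hfix hF hpos hyx
    · rw [hceq]; exact (theta_bounds hfix hF hpos hx r).1
    · rw [hceq]; exact (theta_bounds hfix hF hpos hx r).2
  have huu : uu F y = Int.fract r := by
    rw [uu, htau, hceq, hdeq]
    have : (F ^ (-⌊r⌋)) y = cc F x + Int.fract r * dd F x := by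
      rw [hy, theta, zpow_neg_apply]
    rw [this]
    rw [add_sub_cancel_left, mul_div_cancel_right₀ _ (dd_pos hfix hF hpos hx).ne']
  rw [phi, htau, huu, Int.floor_add_fract]


variable {n : ℕ}

omit hfix hF hpos in
lemma g_apply_fixed {x : ℝ} (h : F x = x) : gg F n x = x := if_pos h

omit hfix hF hpos in
lemma g_apply_nonfixed {x : ℝ} (h : F x ≠ x) : gg F n x = theta F x (phi F x + 1 / n) :=
  if_neg h

lemma g_mem_band {x : ℝ} (hx : F x ≠ x) : AA F x < gg F n x ∧ gg F n x < BB F x := by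
  rw [g_apply_nonfixed hx]
  exact theta_mem_band hfix hF hpos hx _

lemma g_theta {x : ℝ} (hx : F x ≠ x) (r : ℝ) :
    gg F n (theta F x r) = theta F x (r + 1 / n) := by
  obtain ⟨hb1, hb2⟩ := theta_mem_band hfix hF hpos hx r
  have hyx : F (theta F x r) ≠ theta F x r := band_not_fixed hfix hb1 hb2
  obtain ⟨hceq, hdeq⟩ := band_data_eq hfix hF hpos hx hb1 hb2
  rw [g_apply_nonfixed hyx, theta_congr hceq hdeq, phi_theta hfix hF hpos hx r]

lemma g_strictMono (hn : 0 < n) : StrictMono (gg F n) := by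
  intro x y hxy
  by_cases hx : F x = x <;> by_cases hy : F y = y
  · rw [g_apply_fixed hx, g_apply_fixed hy]; exact hxy
  · rw [g_apply_fixed hx]
    have h1 : x ≤ AA F y := le_csSup (Aset_bdd y) ⟨hx, hxy.le⟩
    exact lt_of_le_of_lt h1 (g_mem_band hfix hF hpos hy).1
  · rw [g_apply_fixed hy]
    have h1 : BB F x ≤ y := csInf_le (Bset_bdd x) ⟨hy, hxy.le⟩
    exact lt_of_lt_of_le (g_mem_band hfix hF hpos hx).2 h1
  · by_cases hyB : y < BB F x
    · have hy1 : AA F x < y := lt_trans (A_lt hfix hF hx) hxy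
      obtain ⟨hceq, hdeq⟩ := band_data_eq hfix hF hpos hx hy1 hyB
      have hyform : y = theta F x (phi F y) := by
        rw [← theta_congr hceq hdeq, theta_phi hfix hF hpos hy]
      have hxform : x = theta F x (phi F x) := (theta_phi hfix hF hpos hx).symm
      have hphi : phi F x < phi F y := by
        apply (theta_strictMono hfix hF hpos hx).lt_iff_lt.1
        rw [← hxform, ← hyform]
        exact hxy
      rw [g_apply_nonfixed hx, g_apply_nonfixed hy, theta_congr hceq hdeq]
      exact theta_strictMono hfix hF hpos hx (by linarith)
    · push_neg at hyB
      have h1 : BB F x ≤ AA F y := le_csSup (Aset_bdd y) ⟨B_mem hfix hF x, hyB⟩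
      exact lt_trans (lt_of_lt_of_le (g_mem_band hfix hF hpos hx).2 h1)
        (g_mem_band hfix hF hpos hy).1

lemma g_surjective (hn : 0 < n) : Function.Surjective (gg F n) := by
  intro z
  by_cases hz : F z = z
  · exact ⟨z, g_apply_fixed hz⟩
  · refine ⟨theta F z (phi F z - 1 / n), ?_⟩
    rw [g_theta hfix hF hpos hz, sub_add_cancel, theta_phi hfix hF hpos hz]

lemma g_fix_iff (hn : 0 < n) {x : ℝ} : gg F n x = x ↔ F x = x := by
  constructor
  · intro h
    by_contra hx
    rw [g_apply_nonfixed hx] at h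
    have hxform : theta F x (phi F x) = x := theta_phi hfix hF hpos hx
    have := (theta_strictMono hfix hF hpos hx).injective (h.trans hxform.symm)
    have hn' : (0:ℝ) < 1 / n := by positivity
    linarith
  · exact g_apply_fixed

lemma g_iterate (hn : 0 < n) {x : ℝ} (hx : F x ≠ x) (j : ℕ) :
    (gg F n)^[j] x = theta F x (phi F x + j / n) := by
  induction j with
  | zero => simp [theta_phi hfix hF hpos hx]
  | succ j ih =>
    rw [Function.iterate_succ_apply', ih, g_theta hfix hF hpos hx]
    congr 1
    push_cast
    field_simp
    ring

lemma g_pow_n (hn : 0 < n) (x : ℝ) : (gg F n)^[n] x = F x := by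
  by_cases hx : F x = x
  · rw [Function.iterate_fixed (g_apply_fixed hx) n, hx]
  · rw [g_iterate hfix hF hpos hn hx n, div_self (by positivity : (n:ℝ) ≠ 0)]
    rw [theta, Int.floor_add_one, floor_phi hfix hF hpos hx, Int.fract_add_one,
      fract_phi hfix hF hpos hx, key_eq hfix hF hpos hx, zpow_zpow]
    have : tau F x + 1 + -tau F x = 1 := by ring
    rw [this, zpow_one]

omit hfix hF hpos in
theorem posRoot (F : Equiv.Perm ℝ) (hF : StrictMono ⇑F)
    (hfix : ∀ x, x ∉ Set.Ioo (0:ℝ) 1 → F x = x) (hpos : ∀ x, x ≤ F x)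
    (n : ℕ) (hn : 0 < n) :
    ∃ G : Equiv.Perm ℝ, StrictMono ⇑G ∧ (∀ x, G x = x ↔ F x = x) ∧ G ^ n = F := by
  have hmono := g_strictMono hfix hF hpos (n := n) hn
  have hsurj := g_surjective hfix hF hpos (n := n) hn
  refine ⟨Equiv.ofBijective (gg F n) ⟨hmono.injective, hsurj⟩, hmono, ?_, ?_⟩
  · intro x
    exact g_fix_iff hfix hF hpos hn
  · apply Equiv.ext
    intro x
    calc ((Equiv.ofBijective (gg F n) ⟨hmono.injective, hsurj⟩) ^ n) x
        = (gg F n)^[n] x := by rw [Equiv.Perm.coe_pow]; rfl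
      _ = F x := g_pow_n hfix hF hpos hn x


/-! ### Decomposition into positive and negative parts -/

omit hfix hpos in
lemma cross {x y : ℝ} (hx : x < F x) (hxy : x < y) (hy : F y < y) : F x < y := by
  by_contra hcon
  push_neg at hcon  -- y ≤ F x
  set T := {t : ℝ | t ∈ Icc x y ∧ t ≤ F t} with hT
  have hxT : x ∈ T := ⟨⟨le_refl x, hxy.le⟩, hx.le⟩
  have hTne : T.Nonempty := ⟨x, hxT⟩
  have hTbdd : BddAbove T := ⟨y, fun t ht => ht.1.2⟩
  set z := sSup T with hz
  have hxz : x ≤ z := le_csSup hTbdd hxT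
  have hzy : z ≤ y := csSup_le hTne fun t ht => ht.1.2
  have hzF : z ≤ F z :=
    csSup_le hTne fun t ht => ht.2.trans (hF.monotone (le_csSup hTbdd ht))
  rcases eq_or_lt_of_le hzF with heq | hlt
  · -- F z = z : contradiction
    have hxz' : x < z := by
      rcases eq_or_lt_of_le hxz with h | h
      · exfalso; rw [← h] at heq; exact absurd heq.symm hx.ne'
      · exact h
    have h1 : F x < F z := hF hxz'
    rw [← heq] at h1
    linarith
  · -- z < F z : contradiction with sup
    have hzy' : z < y := by
      rcases eq_or_lt_of_le hzy with h | h
      · exfalso; rw [h] at hlt; exact absurd (lt_trans hy hlt) (lt_irrefl (F y))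
      · exact h
    set t := min (F z) y with ht'
    have hzt : z < t := lt_min hlt hzy'
    have htT : t ∈ T := by
      refine ⟨⟨hxz.trans hzt.le, min_le_right _ _⟩, ?_⟩
      have h1 : F z < F t := hF hzt
      exact (min_le_left (F z) y).trans h1.le
    exact absurd (le_csSup hTbdd htT) (not_le.2 hzt)

omit hfix hpos in
lemma exists_posPart :
    ∃ P : Equiv.Perm ℝ, StrictMono ⇑P ∧ ∀ x, P x = if x < F x then F x else x := by
  set p : ℝ → ℝ := fun x => if x < F x then F x else x with hp
  have hmono : StrictMono p := by
    intro x y hxy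
    by_cases hx : x < F x <;> by_cases hy : y < F y
    · simp only [hp, if_pos hx, if_pos hy]
      exact hF hxy
    · simp only [hp, if_pos hx, if_neg hy]
      push_neg at hy
      rcases eq_or_lt_of_le hy with h | h
      · calc F x < F y := hF hxy
          _ = y := h
      · exact cross hF hx hxy h
    · simp only [hp, if_neg hx, if_pos hy]
      exact lt_trans hxy hy
    · simp only [hp, if_neg hx, if_neg hy]
      exact hxy
  have hsurj : Function.Surjective p := by
    intro z
    by_cases hz : z < F z
    · refine ⟨F⁻¹ z, ?_⟩
      have h1 : F⁻¹ z < z := by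
        by_contra h
        push_neg at h
        have := hF.monotone h
        rw [Equiv.Perm.apply_inv_self] at this
        exact absurd hz (not_lt.2 this)
      have h2 : F⁻¹ z < F (F⁻¹ z) := by rwa [Equiv.Perm.apply_inv_self]
      simp only [hp, if_pos h2, Equiv.Perm.apply_inv_self]
    · exact ⟨z, by simp only [hp, if_neg hz]⟩
  exact ⟨Equiv.ofBijective p ⟨hmono.injective, hsurj⟩, hmono, fun x => rfl⟩

/-! ### The real-line theorem -/

omit hF hpos in
theorem realRoot (hF : StrictMono ⇑F) (n : ℕ) (hn : 0 < n) :
    ∃ G : Equiv.Perm ℝ, StrictMono ⇑G ∧ (∀ x, x ∉ Set.Ioo (0:ℝ) 1 → G x = x) ∧ G ^ n = F := by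
  obtain ⟨P, hPmono, hP⟩ := exists_posPart hF
  obtain ⟨Q, hQmono, hQ⟩ := exists_posPart (inv_strictMono hF)
  -- basic facts about P and Q
  have hPfixiff : ∀ x, P x = x ↔ ¬ x < F x := by
    intro x
    rw [hP]
    by_cases h : x < F x
    · rw [if_pos h]
      constructor
      · intro he
        exact absurd he h.ne'
      · intro he
        exact absurd h he
    · rw [if_neg h]
      exact ⟨fun _ => h, fun _ => rfl⟩
  have hiffQ : ∀ x : ℝ, x < F⁻¹ x ↔ F x < x := by
    intro x
    constructor
    · intro h
      have := hF h
      rwa [Equiv.Perm.apply_inv_self] at this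
    · intro h
      have := inv_strictMono hF h
      rwa [Equiv.Perm.inv_apply_self] at this
  have hQfixiff : ∀ x, Q x = x ↔ ¬ F x < x := by
    intro x
    rw [hQ]
    by_cases h : x < F⁻¹ x
    · rw [if_pos h]
      constructor
      · intro he
        exfalso
        rw [he] at h
        exact lt_irrefl x h
      · intro hne
        exact absurd ((hiffQ x).1 h) hne
    · rw [if_neg h]
      rw [← hiffQ]
      exact ⟨fun _ => h, fun _ => rfl⟩
  have hPpos : ∀ x, x ≤ P x := by
    intro x
    rw [hP]
    by_cases h : x < F x
    · rw [if_pos h]; exact h.le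
    · rw [if_neg h]
  have hQpos : ∀ x, x ≤ Q x := by
    intro x
    rw [hQ]
    by_cases h : x < F⁻¹ x
    · rw [if_pos h]; exact h.le
    · rw [if_neg h]
  have hPfix_out : ∀ x, x ∉ Set.Ioo (0:ℝ) 1 → P x = x := by
    intro x hx
    rw [hP, if_neg]
    rw [hfix x hx]
    exact lt_irrefl x
  have hQfix_out : ∀ x, x ∉ Set.Ioo (0:ℝ) 1 → Q x = x := by
    intro x hx
    rw [hQ, if_neg]
    intro h
    rw [(hiffQ x), hfix x hx] at h
    exact lt_irrefl x h
  have hPQ : F * Q = P := by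
    apply Equiv.ext
    intro y
    rw [Equiv.Perm.mul_apply, hQ, hP]
    rcases lt_trichotomy (F y) y with h | h | h
    · rw [if_pos ((hiffQ y).2 h), if_neg (not_lt.2 h.le), Equiv.Perm.apply_inv_self]
    · rw [if_neg (by rw [hiffQ]; exact fun hc => absurd h (ne_of_lt hc)), if_neg (by rw [h]; exact lt_irrefl y)]
      exact h
    · rw [if_neg (by rw [hiffQ]; exact not_lt.2 h.le), if_pos h]
  obtain ⟨Gp, hGpm, hGpfix, hGpn⟩ := posRoot P hPmono hPfix_out hPpos n hn
  obtain ⟨H, hHm, hHfix, hHn⟩ := posRoot Q hQmono hQfix_out hQpos n hn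
  set Gm := H⁻¹ with hGm
  have hGmm : StrictMono ⇑Gm := inv_strictMono hHm
  have hGmfix : ∀ x, Gm x = x ↔ ¬ F x < x := by
    intro x
    rw [hGm]
    constructor
    · intro h
      have : H x = x := by
        conv_lhs => rw [← h]
        exact H.apply_inv_self x
      exact (hQfixiff x).1 ((hHfix x).1 this)
    · intro h
      have : H x = x := (hHfix x).2 ((hQfixiff x).2 h)
      conv_lhs => rw [← this]
      exact H.inv_apply_self x
  have hGpfix' : ∀ x, Gp x = x ↔ ¬ x < F x := fun x => (hGpfix x).trans (hPfixiff x)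
  have hcomm : Commute Gp Gm := by
    apply Equiv.ext
    intro x
    rw [Equiv.Perm.mul_apply, Equiv.Perm.mul_apply]
    rcases lt_trichotomy (F x) x with h | h | h
    · -- negative point : Gp fixes x and Gp fixes Gm x
      have hgp : Gp x = x := (hGpfix' x).2 (not_lt.2 h.le)
      rw [hgp]
      have : Gp (Gm x) = Gm x := by
        apply (hGpfix' _).2
        intro hlt
        have hgmz : Gm (Gm x) = Gm x := (hGmfix _).2 (not_lt.2 hlt.le)
        have : Gm x = x := hGmm.injective hgmz
        rw [this] at hlt
        exact absurd h (not_lt.2 hlt.le)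
      rw [this]
    · have hgp : Gp x = x := (hGpfix' x).2 (by rw [h]; exact lt_irrefl x)
      have hgm : Gm x = x := (hGmfix x).2 (by rw [h]; exact lt_irrefl x)
      simp [hgp, hgm]
    · -- positive point : Gm fixes x and Gm fixes Gp x
      have hgm : Gm x = x := (hGmfix x).2 (not_lt.2 h.le)
      rw [hgm]
      have : Gm (Gp x) = Gp x := by
        apply (hGmfix _).2
        intro hlt
        have hgpz : Gp (Gp x) = Gp x := (hGpfix' _).2 (not_lt.2 hlt.le)
        have : Gp x = x := hGpm.injective hgpz
        rw [this] at hlt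
        exact absurd h (not_lt.2 hlt.le)
      rw [this]
  refine ⟨Gp * Gm, ?_, ?_, ?_⟩
  · rw [Equiv.Perm.coe_mul]
    exact hGpm.comp hGmm
  · intro x hx
    have h1 : Gm x = x := (hGmfix x).2 (by rw [hfix x hx]; exact lt_irrefl x)
    have h2 : Gp x = x := (hGpfix' x).2 (by rw [hfix x hx]; exact lt_irrefl x)
    rw [Equiv.Perm.mul_apply, h1, h2]
  · rw [hcomm.mul_pow, hGpn, hGm, inv_pow, hHn, ← hPQ]
    group

end NthRootAux

open NthRootAux in
/-- Homeo⁺(I): strictly increasing bijections of [0,1] (such a map is automatically a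
homeomorphism fixing the endpoints).  Every such map has an n-th root for every n > 0. -/
theorem exists_nth_root_homeoI (f : Equiv.Perm (Set.Icc (0:ℝ) 1)) (hf : StrictMono f)
    (n : ℕ) (hn : 0 < n) :
    ∃ g : Equiv.Perm (Set.Icc (0:ℝ) 1), StrictMono g ∧ g ^ n = f := by
  have h0 : (0:ℝ) ∈ Set.Icc (0:ℝ) 1 := by norm_num
  have h1 : (1:ℝ) ∈ Set.Icc (0:ℝ) 1 := by norm_num
  -- f fixes the endpoints
  have hbot : ∀ y : Set.Icc (0:ℝ) 1, (⟨0, h0⟩ : Set.Icc (0:ℝ) 1) ≤ y :=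
    fun y => Subtype.mk_le_mk.2 y.2.1
  have htop : ∀ y : Set.Icc (0:ℝ) 1, y ≤ (⟨1, h1⟩ : Set.Icc (0:ℝ) 1) :=
    fun y => Subtype.mk_le_mk.2 y.2.2
  have hf0 : f ⟨0, h0⟩ = ⟨0, h0⟩ := by
    have h2 : f ⟨0, h0⟩ ≤ f (f⁻¹ ⟨0, h0⟩) := hf.monotone (hbot _)
    rw [Equiv.Perm.apply_inv_self] at h2
    exact le_antisymm h2 (hbot _)
  have hf1 : f ⟨1, h1⟩ = ⟨1, h1⟩ := by
    have h2 : f (f⁻¹ ⟨1, h1⟩) ≤ f ⟨1, h1⟩ := hf.monotone (htop _)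
    rw [Equiv.Perm.apply_inv_self] at h2
    exact le_antisymm (htop _) h2
  -- extend f to ℝ
  set F0 : ℝ → ℝ := fun x => if h : x ∈ Set.Icc (0:ℝ) 1 then ((f ⟨x, h⟩ : Set.Icc (0:ℝ) 1) : ℝ) else x
    with hF0
  have hF0mono : StrictMono F0 := by
    intro a b hab
    by_cases ha : a ∈ Set.Icc (0:ℝ) 1 <;> by_cases hb : b ∈ Set.Icc (0:ℝ) 1
    · simp only [hF0, dif_pos ha, dif_pos hb]
      exact Subtype.coe_lt_coe.2 (hf (Subtype.mk_lt_mk.2 hab))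
    · simp only [hF0, dif_pos ha, dif_neg hb]
      have hb1 : 1 < b := by
        by_contra hc
        push_neg at hc
        exact hb ⟨le_trans ha.1 hab.le, hc⟩
      exact lt_of_le_of_lt (f ⟨a, ha⟩).2.2 hb1
    · simp only [hF0, dif_neg ha, dif_pos hb]
      have ha0 : a < 0 := by
        by_contra hc
        push_neg at hc
        exact ha ⟨hc, le_trans hab.le hb.2⟩
      exact lt_of_lt_of_le ha0 (f ⟨b, hb⟩).2.1
    · simp only [hF0, dif_neg ha, dif_neg hb]
      exact hab
  have hF0surj : Function.Surjective F0 := by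
    intro z
    by_cases hz : z ∈ Set.Icc (0:ℝ) 1
    · have hw := (f⁻¹ ⟨z, hz⟩).2
      refine ⟨(f⁻¹ ⟨z, hz⟩ : Set.Icc (0:ℝ) 1), ?_⟩
      simp only [hF0, dif_pos hw]
      rw [Subtype.coe_eta, Equiv.Perm.apply_inv_self]
    · exact ⟨z, by simp only [hF0, dif_neg hz]⟩
  set Fperm : Equiv.Perm ℝ := Equiv.ofBijective F0 ⟨hF0mono.injective, hF0surj⟩ with hFp
  have hFpermfix : ∀ x, x ∉ Set.Ioo (0:ℝ) 1 → Fperm x = x := by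
    intro x hx
    show F0 x = x
    by_cases hxI : x ∈ Set.Icc (0:ℝ) 1
    · have : x = 0 ∨ x = 1 := by
        rcases eq_or_lt_of_le hxI.1 with h | h
        · exact Or.inl h.symm
        · rcases eq_or_lt_of_le hxI.2 with h' | h'
          · exact Or.inr h'
          · exact absurd ⟨h, h'⟩ hx
      rcases this with rfl | rfl
      · simp only [hF0, dif_pos h0]
        rw [hf0]
      · simp only [hF0, dif_pos h1]
        rw [hf1]
    · simp only [hF0, dif_neg hxI]
  obtain ⟨G, hGm, hGfix, hGn⟩ := realRoot hFpermfix hF0mono n hn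
  have hG0 : G 0 = 0 := hGfix 0 (by simp)
  have hG1 : G 1 = 1 := hGfix 1 (by simp)
  have hGmap : ∀ x : ℝ, x ∈ Set.Icc (0:ℝ) 1 → G x ∈ Set.Icc (0:ℝ) 1 := by
    intro x hx
    constructor
    · rw [← hG0]; exact hGm.monotone hx.1
    · rw [← hG1]; exact hGm.monotone hx.2
  set gI : Set.Icc (0:ℝ) 1 → Set.Icc (0:ℝ) 1 := fun x => ⟨G ↑x, hGmap _ x.2⟩ with hgI
  have hgImono : StrictMono gI := by
    intro a b hab
    exact Subtype.mk_lt_mk.2 (hGm (Subtype.coe_lt_coe.2 hab))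
  have hgIsurj : Function.Surjective gI := by
    intro z
    have hw : (G⁻¹ ↑z : ℝ) ∈ Set.Icc (0:ℝ) 1 := by
      constructor
      · by_contra hc
        push_neg at hc
        have := hGm hc
        rw [hG0, Equiv.Perm.apply_inv_self] at this
        exact absurd z.2.1 (not_le.2 this)
      · by_contra hc
        push_neg at hc
        have := hGm hc
        rw [hG1, Equiv.Perm.apply_inv_self] at this
        exact absurd z.2.2 (not_le.2 this)
    refine ⟨⟨G⁻¹ ↑z, hw⟩, ?_⟩
    apply Subtype.ext
    show G (G⁻¹ ↑z) = ↑z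
    exact Equiv.Perm.apply_inv_self G ↑z
  have hiter : ∀ (j : ℕ) (x : Set.Icc (0:ℝ) 1), ((gI^[j] x : Set.Icc (0:ℝ) 1) : ℝ) = (⇑G)^[j] ↑x := by
    intro j
    induction j with
    | zero => intro x; simp
    | succ j ih =>
      intro x
      rw [Function.iterate_succ_apply', Function.iterate_succ_apply']
      show (G ↑(gI^[j] x) : ℝ) = G ((⇑G)^[j] ↑x)
      rw [ih x]
  refine ⟨Equiv.ofBijective gI ⟨hgImono.injective, hgIsurj⟩, hgImono, ?_⟩
  apply Equiv.ext
  intro x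
  apply Subtype.ext
  calc ((((Equiv.ofBijective gI ⟨hgImono.injective, hgIsurj⟩) ^ n) x : Set.Icc (0:ℝ) 1) : ℝ)
      = ((gI^[n] x : Set.Icc (0:ℝ) 1) : ℝ) := by rw [Equiv.Perm.coe_pow]; rfl
    _ = (⇑G)^[n] ↑x := hiter n x
    _ = (G ^ n) ↑x := by rw [Equiv.Perm.coe_pow]
    _ = Fperm ↑x := by rw [hGn]
    _ = ((f x : Set.Icc (0:ℝ) 1) : ℝ) := by
        show F0 ↑x = _
        simp only [hF0, dif_pos x.2]
end

section
/- For every integer n ≥ 2, the set of orientation-preserving homeomorphisms g of ℝ satisfying g^n = τ, where τ(x) = x + 1 is translation by one, is uncountable. -/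
open Real Filter Set

noncomputable def pfun (a x : ℝ) : ℝ := x + a * |Real.sin (π * x)|

lemma pfun_lip (x y : ℝ) :
    abs (abs (Real.sin (π * y)) - abs (Real.sin (π * x))) ≤ π * |y - x| := by
  have h1 : abs (abs (Real.sin (π * y)) - abs (Real.sin (π * x)))
      ≤ |Real.sin (π * y) - Real.sin (π * x)| := abs_abs_sub_abs_le_abs_sub _ _
  have h2 : |Real.sin (π * y) - Real.sin (π * x)| ≤ |π * y - π * x| := by
    rw [Real.sin_sub_sin, abs_mul, abs_mul]
    have hs : |Real.sin ((π * y - π * x) / 2)| ≤ |(π * y - π * x) / 2| :=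
      Real.abs_sin_le_abs
    have hc : |Real.cos ((π * y + π * x) / 2)| ≤ 1 := Real.abs_cos_le_one _
    have h4 : |(π * y - π * x) / 2| = |π * y - π * x| / 2 := by
      rw [abs_div]; norm_num
    rw [h4] at hs
    have hnn : (0:ℝ) ≤ |Real.sin ((π * y - π * x) / 2)| := abs_nonneg _
    have hnn2 : (0:ℝ) ≤ |π * y - π * x| := abs_nonneg _
    rw [abs_two]
    nlinarith
  have h3 : |π * y - π * x| = π * |y - x| := by
    rw [← mul_sub, abs_mul, abs_of_pos Real.pi_pos]
  rw [h3] at h2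
  linarith

lemma pfun_strictMono {a : ℝ} (ha0 : 0 ≤ a) (ha : a < 1/4) : StrictMono (pfun a) := by
  intro x y hxy
  have hlip := pfun_lip x y
  have habs : |y - x| = y - x := abs_of_pos (by linarith)
  rw [habs] at hlip
  have h1 : abs (Real.sin (π * y)) - abs (Real.sin (π * x)) ≥ -(π * (y - x)) := by
    have := abs_le.mp hlip
    linarith [this.1]
  have hπ : π < 4 := by linarith [Real.pi_lt_d2]
  have haπ : a * π < 1 := by nlinarith [Real.pi_pos]
  have h4 : a * (abs (Real.sin (π * y)) - abs (Real.sin (π * x))) ≥ -(a * π * (y - x)) := by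
    nlinarith
  have h5 : a * π * (y - x) < y - x := by nlinarith [Real.pi_pos]
  unfold pfun
  nlinarith

lemma pfun_cont (a : ℝ) : Continuous (pfun a) := by
  unfold pfun
  fun_prop

lemma pfun_surj {a : ℝ} (ha0 : 0 ≤ a) : Function.Surjective (pfun a) := by
  apply (pfun_cont a).surjective
  · apply tendsto_atTop_mono (fun x => ?_) tendsto_id
    have : 0 ≤ a * |Real.sin (π * x)| := mul_nonneg ha0 (abs_nonneg _)
    simpa [pfun] using by linarith
  · apply tendsto_atBot_mono (fun x => ?_) (tendsto_atBot_add_const_right _ a tendsto_id)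
    have h1 : |Real.sin (π * x)| ≤ 1 := Real.abs_sin_le_one _
    have h2 : a * |Real.sin (π * x)| ≤ a * 1 := mul_le_mul_of_nonneg_left h1 ha0
    simp only [pfun, id]
    linarith

lemma pfun_add_one (a x : ℝ) : pfun a (x + 1) = pfun a x + 1 := by
  have : Real.sin (π * (x + 1)) = -Real.sin (π * x) := by
    rw [mul_add, mul_one, Real.sin_add_pi]
  simp [pfun, this, abs_neg]; ring

noncomputable def Hperm {a : ℝ} (ha0 : 0 ≤ a) (ha : a < 1/4) : Equiv.Perm ℝ :=
  (StrictMono.orderIsoOfSurjective (pfun a) (pfun_strictMono ha0 ha) (pfun_surj ha0)).toEquiv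

lemma Hperm_apply {a : ℝ} (ha0 : 0 ≤ a) (ha : a < 1/4) (x : ℝ) :
    Hperm ha0 ha x = pfun a x := rfl

lemma Hperm_strictMono {a : ℝ} (ha0 : 0 ≤ a) (ha : a < 1/4) :
    StrictMono (Hperm ha0 ha) := pfun_strictMono ha0 ha

lemma Hperm_inv_strictMono {a : ℝ} (ha0 : 0 ≤ a) (ha : a < 1/4) :
    StrictMono ((Hperm ha0 ha)⁻¹ : Equiv.Perm ℝ) :=
  (StrictMono.orderIsoOfSurjective (pfun a) (pfun_strictMono ha0 ha) (pfun_surj ha0)).symm.strictMono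

lemma conj_pow_aux {G : Type*} [Group G] (h r : G) (m : ℕ) :
    (h * r * h⁻¹) ^ m = h * r ^ m * h⁻¹ := by
  induction m with
  | zero => simp
  | succ k ih => rw [pow_succ, ih, pow_succ]; group

/-- The set of orientation-preserving homeomorphisms (= strictly increasing bijections)
`g` of `ℝ` with `g ^ n = τ`, where `τ` is translation by one, is uncountable for `n ≥ 2`. -/
theorem uncountable_nth_roots_of_translation (n : ℕ) (hn : 2 ≤ n)
    (τ : Equiv.Perm ℝ) (hτ : ∀ x, τ x = x + 1) :
    ¬ ({g : Equiv.Perm ℝ | StrictMono g ∧ g ^ n = τ}).Countable := by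
  intro hS
  have hnpos : (0:ℝ) < n := by positivity
  have hn1 : (1:ℝ) ≤ n := by exact_mod_cast (by omega : 1 ≤ n)
  have hn2 : (2:ℝ) ≤ n := by exact_mod_cast hn
  -- translation by 1/n
  set r : Equiv.Perm ℝ := (Equiv.addRight ((n:ℝ)⁻¹)) with hr
  have hrapp : ∀ x : ℝ, r x = x + (n:ℝ)⁻¹ := fun x => rfl
  have hrpow : ∀ (m : ℕ) (x : ℝ), (r ^ m) x = x + m * (n:ℝ)⁻¹ := by
    intro m
    induction m with
    | zero => intro x; simp
    | succ k ih =>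
      intro x
      rw [pow_succ, Equiv.Perm.mul_apply, hrapp, ih]
      push_cast
      ring
  have hrn : r ^ n = τ := by
    ext x
    rw [hrpow n x, hτ, mul_inv_cancel₀ (by positivity)]
  -- the family of conjugates
  have key : ∀ a ∈ Ioo (0:ℝ) (1/4), ∃ g ∈ {g : Equiv.Perm ℝ | StrictMono g ∧ g ^ n = τ},
      g 0 = (n:ℝ)⁻¹ + a * Real.sin (π * (n:ℝ)⁻¹) := by
    intro a ⟨ha0, ha4⟩
    have ha0' : (0:ℝ) ≤ a := le_of_lt ha0
    set h : Equiv.Perm ℝ := Hperm ha0' ha4 with hh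
    have hcomm : h * τ = τ * h := by
      ext x
      simp only [Equiv.Perm.mul_apply, hτ, hh, Hperm_apply]
      exact pfun_add_one a x
    refine ⟨h * r * h⁻¹, ⟨?_, ?_⟩, ?_⟩
    · intro x y hxy
      simp only [Equiv.Perm.mul_apply]
      apply Hperm_strictMono ha0' ha4
      rw [hrapp, hrapp]
      exact add_lt_add_of_lt_of_le (Hperm_inv_strictMono ha0' ha4 hxy) le_rfl
    · rw [conj_pow_aux, hrn, hcomm, mul_assoc, mul_inv_cancel, mul_one]
    · have h0 : h 0 = 0 := by
        simp [hh, Hperm_apply, pfun]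
      have hinv0 : h⁻¹ 0 = 0 := by
        rw [Equiv.Perm.inv_eq_iff_eq]
        exact h0.symm
      simp only [Equiv.Perm.mul_apply, hinv0, hrapp, zero_add]
      rw [hh, Hperm_apply]
      unfold pfun
      rw [abs_of_nonneg]
      apply Real.sin_nonneg_of_nonneg_of_le_pi
      · positivity
      · rw [mul_inv_le_iff₀ hnpos]
        nlinarith [Real.pi_pos]
  -- build an injection from Ioo 0 (1/4) into the set
  choose! g hgmem hgval using key
  have hsinpos : 0 < Real.sin (π * (n:ℝ)⁻¹) := by
    apply Real.sin_pos_of_pos_of_lt_pi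
    · positivity
    · rw [mul_inv_lt_iff₀ hnpos]
      nlinarith [Real.pi_pos]
  have hinj : InjOn g (Ioo (0:ℝ) (1/4)) := by
    intro a ha b hb hab
    have h2 : g a 0 = g b 0 := by rw [hab]
    rw [hgval a ha, hgval b hb] at h2
    have h3 : a * Real.sin (π * (n:ℝ)⁻¹) = b * Real.sin (π * (n:ℝ)⁻¹) := by linarith
    exact mul_right_cancel₀ (ne_of_gt hsinpos) h3
  have himg : (g '' Ioo (0:ℝ) (1/4)).Countable :=
    hS.mono (by rintro _ ⟨a, ha, rfl⟩; exact hgmem a ha)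
  haveI hc : Countable ↥(g '' Ioo (0:ℝ) (1/4)) := himg.to_subtype
  have hF : Function.Injective
      (fun a : ↥(Ioo (0:ℝ) (1/4)) => (⟨g a, ⟨a, a.2, rfl⟩⟩ : ↥(g '' Ioo (0:ℝ) (1/4)))) :=
    fun a b hab => Subtype.ext (hinj a.2 b.2 (congrArg Subtype.val hab))
  haveI : Countable ↥(Ioo (0:ℝ) (1/4)) := hF.countable
  have hle : Cardinal.mk ↥(Ioo (0:ℝ) (1/4)) ≤ Cardinal.aleph0 :=
    Cardinal.mk_le_aleph0
  rw [Cardinal.mk_Ioo_real (show (0:ℝ) < 1/4 by norm_num)] at hle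
  exact absurd hle (not_le.mpr Cardinal.aleph0_lt_continuum)
end

section
/- Let ψ be a homeomorphism of ℝ, not the identity, whose support is contained in (0,1), and let τ(x) = x+1. Then the subgroup ⟨ψ, τ⟩ of Homeo⁺(ℝ) is isomorphic to the lamplighter group ℤ ≀ ℤ = ℤ ⋉ (⊕_{i∈ℤ} ℤ), where ℤ acts by shifting indices. -/
/-- The shift automorphism of `⊕_{i∈ℤ} ℤ`, written multiplicatively. -/
noncomputable def lampShift : MulAut (Multiplicative (ℤ →₀ ℤ)) :=
  AddEquiv.toMultiplicative (Finsupp.domCongr (Equiv.addRight (1 : ℤ)))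

/-- The homomorphism `ℤ → Aut(⊕_{i∈ℤ} ℤ)` sending `1` to the shift. -/
noncomputable def lampAction : Multiplicative ℤ →* MulAut (Multiplicative (ℤ →₀ ℤ)) :=
  zpowersHom _ lampShift

/-- The lamplighter group `ℤ ≀ ℤ = ℤ ⋉ (⊕_{i∈ℤ} ℤ)`. -/
abbrev Lamplighter := SemidirectProduct (Multiplicative (ℤ →₀ ℤ)) (Multiplicative ℤ) lampAction

namespace LampAux

open Equiv Set

/-- `g` is supported in `s`: it fixes every point outside `s`. -/
def Fix (g : Equiv.Perm ℝ) (s : Set ℝ) : Prop := ∀ x ∉ s, g x = x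

lemma Fix.inv {g : Equiv.Perm ℝ} {s : Set ℝ} (hg : Fix g s) : Fix g⁻¹ s := fun x hx => by
  conv_lhs => rw [← hg x hx]
  simp

lemma Fix.pow {g : Equiv.Perm ℝ} {s : Set ℝ} (hg : Fix g s) (n : ℕ) : Fix (g ^ n) s := by
  induction n with
  | zero => intro x _; simp
  | succ n ih =>
    intro x hx
    rw [pow_succ, Equiv.Perm.mul_apply, hg x hx, ih x hx]

lemma Fix.zpow {g : Equiv.Perm ℝ} {s : Set ℝ} (hg : Fix g s) (a : ℤ) : Fix (g ^ a) s := by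
  rcases a with n | n
  · simpa using hg.pow n
  · rw [zpow_negSucc]
    exact (hg.pow (n + 1)).inv

lemma Fix.mapsTo {g : Equiv.Perm ℝ} {s : Set ℝ} (hg : Fix g s) {x : ℝ} (hx : x ∈ s) :
    g x ∈ s := by
  by_contra h
  have h2 := hg _ h
  have := g.injective h2
  rw [this] at h
  exact h hx

lemma Fix.commute {g h : Equiv.Perm ℝ} {s t : Set ℝ} (hg : Fix g s) (hh : Fix h t)
    (hst : Disjoint s t) : Commute g h := by
  apply Equiv.ext
  intro x
  by_cases hxs : x ∈ s
  · have hxt : x ∉ t := fun hxt => hst.ne_of_mem hxs hxt rfl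
    have h1 : h x = x := hh x hxt
    have h2 : h (g x) = g x := hh _ (fun hm => hst.ne_of_mem (hg.mapsTo hxs) hm rfl)
    simp only [Equiv.Perm.mul_apply, h1, h2]
  · by_cases hxt : x ∈ t
    · have h1 : g x = x := hg x hxs
      have h2 : g (h x) = h x := hg _ (fun hm => (hst.symm.ne_of_mem (hh.mapsTo hxt) hm) rfl)
      simp only [Equiv.Perm.mul_apply, h1, h2]
    · simp only [Equiv.Perm.mul_apply, hg x hxs, hh x hxt]

/-- The intervals `(i, i+1)` for distinct integers `i` are disjoint. -/
lemma ioo_disjoint {i j : ℤ} (hij : i ≠ j) :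
    Disjoint (Set.Ioo (i : ℝ) (i + 1)) (Set.Ioo (j : ℝ) (j + 1)) := by
  rw [Set.disjoint_iff_inter_eq_empty]
  ext x
  simp only [Set.mem_inter_iff, Set.mem_Ioo, Set.mem_empty_iff_false, iff_false]
  rintro ⟨⟨h1, h2⟩, h3, h4⟩
  apply hij
  have hij1 : i < j + 1 := by exact_mod_cast (by linarith : (i:ℝ) < j + 1)
  have hij2 : j < i + 1 := by exact_mod_cast (by linarith : (j:ℝ) < i + 1)
  omega

/-- No integer lies in `(i, i+1)`. -/
lemma intCast_not_mem_ioo (i m : ℤ) : (m : ℝ) ∉ Set.Ioo (i : ℝ) (i + 1) := by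
  rintro ⟨h1, h2⟩
  have h1' : i < m := by exact_mod_cast h1
  have h2' : m < i + 1 := by exact_mod_cast h2
  omega

variable (ψ τ : Equiv.Perm ℝ)

/-- The conjugate `τ^i ψ τ^{-i}`. -/
noncomputable def psiI (i : ℤ) : Equiv.Perm ℝ := τ ^ i * ψ * (τ ^ i)⁻¹

section
variable {ψ τ}

lemma tau_zpow (hτ : ∀ x, τ x = x + 1) (n : ℤ) (x : ℝ) : (τ ^ n) x = x + n := by
  have hinv : ∀ y : ℝ, (τ ^ (-1 : ℤ)) y = y - 1 := by
    intro y
    apply τ.injective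
    have : τ ((τ ^ (-1 : ℤ)) y) = (τ ^ (1 + -1 : ℤ)) y := by
      rw [zpow_add, zpow_one, Equiv.Perm.mul_apply]
    rw [this, hτ (y - 1)]
    simp
  have key : ∀ m : ℤ, ∀ y : ℝ, (τ ^ m) y = y + m := by
    intro m
    induction m using Int.induction_on with
    | zero => simp
    | succ k ih =>
      intro y
      rw [zpow_add_one, Equiv.Perm.mul_apply, hτ y, ih]
      push_cast; ring
    | pred k ih =>
      intro y
      rw [show (-(k:ℤ) - 1) = (-(k:ℤ)) + (-1) by ring, zpow_add, Equiv.Perm.mul_apply,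
        hinv y, ih]
      push_cast; ring
  exact key n x

lemma psiI_fix (hτ : ∀ x, τ x = x + 1) (hsupp : {x : ℝ | ψ x ≠ x} ⊆ Set.Ioo 0 1) (i : ℤ) :
    Fix (psiI ψ τ i) (Set.Ioo (i : ℝ) (i + 1)) := by
  intro x hx
  have hfix : ∀ y : ℝ, y ∉ Set.Ioo (0:ℝ) 1 → ψ y = y := by
    intro y hy
    by_contra h
    exact hy (hsupp h)
  have h1 : (τ ^ i)⁻¹ x = x - i := by
    apply (τ ^ i).injective
    rw [Equiv.Perm.coe_inv, Equiv.apply_symm_apply, tau_zpow hτ]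
    ring
  simp only [psiI, Equiv.Perm.mul_apply, h1]
  rw [hfix (x - i) (by
    intro hmem
    exact hx ⟨by linarith [hmem.1], by linarith [hmem.2]⟩)]
  rw [tau_zpow hτ]
  ring

lemma psiI_commute (hτ : ∀ x, τ x = x + 1) (hsupp : {x : ℝ | ψ x ≠ x} ⊆ Set.Ioo 0 1)
    (i j : ℤ) : Commute (psiI ψ τ i) (psiI ψ τ j) := by
  rcases eq_or_ne i j with rfl | hij
  · exact Commute.refl _
  · exact Fix.commute (psiI_fix hτ hsupp i) (psiI_fix hτ hsupp j) (ioo_disjoint hij)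

lemma psiI_conj (n i : ℤ) :
    τ ^ n * psiI ψ τ i * (τ ^ n)⁻¹ = psiI ψ τ (i + n) := by
  simp only [psiI, zpow_add]
  group

lemma psiI_zpow (i a : ℤ) : psiI ψ τ i ^ a = τ ^ i * ψ ^ a * (τ ^ i)⁻¹ := by
  have : psiI ψ τ i = MulAut.conj (τ ^ i) ψ := rfl
  rw [this, ← map_zpow]
  rfl

end

/-- The subgroup generated by the conjugates. -/
noncomputable def Ksub : Subgroup (Equiv.Perm ℝ) := Subgroup.closure (Set.range (psiI ψ τ))

/-- `Ksub` is commutative when the generators pairwise commute. -/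
noncomputable def commK (hcomm : ∀ i j, Commute (psiI ψ τ i) (psiI ψ τ j)) :
    CommGroup (Ksub ψ τ) :=
  Subgroup.closureCommGroupOfComm (by rintro x ⟨i, rfl⟩ y ⟨j, rfl⟩; exact hcomm i j)

/-- The homomorphism `⊕ℤ → Perm ℝ`, `f ↦ ∏ ψᵢ^{f i}`. -/
noncomputable def phiHom (hcomm : ∀ i j, Commute (psiI ψ τ i) (psiI ψ τ j)) :
    Multiplicative (ℤ →₀ ℤ) →* Equiv.Perm ℝ :=
  letI := commK ψ τ hcomm
  (Ksub ψ τ).subtype.comp <| AddMonoidHom.toMultiplicativeLeft <|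
    Finsupp.liftAddHom fun i =>
      MonoidHom.toAdditiveRight (zpowersHom (Ksub ψ τ)
        ⟨psiI ψ τ i, Subgroup.subset_closure ⟨i, rfl⟩⟩)

lemma phi_mem (hcomm : ∀ i j, Commute (psiI ψ τ i) (psiI ψ τ j))
    (f : Multiplicative (ℤ →₀ ℤ)) : phiHom ψ τ hcomm f ∈ Ksub ψ τ := by
  simp only [phiHom, MonoidHom.comp_apply, Subgroup.coe_subtype]
  exact SetLike.coe_mem _

lemma phi_single (hcomm : ∀ i j, Commute (psiI ψ τ i) (psiI ψ τ j)) (i : ℤ) (a : ℤ) :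
    phiHom ψ τ hcomm (Multiplicative.ofAdd (Finsupp.single i a)) = psiI ψ τ i ^ a := by
  letI := commK ψ τ hcomm
  simp only [phiHom, MonoidHom.comp_apply, Subgroup.coe_subtype]
  erw [AddMonoidHom.toMultiplicativeLeft_apply_apply, Finsupp.liftAddHom_apply_single]
  rfl

section
variable {ψ τ}

/-- Pointwise behaviour of `phiHom` on the interval `(i, i+1)`. -/
lemma phi_apply (hτ : ∀ x, τ x = x + 1) (hsupp : {x : ℝ | ψ x ≠ x} ⊆ Set.Ioo 0 1)
    (hcomm : ∀ i j, Commute (psiI ψ τ i) (psiI ψ τ j)) (f : ℤ →₀ ℤ) (i : ℤ)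
    {x : ℝ} (hx : x ∈ Set.Ioo (i : ℝ) (i + 1)) :
    phiHom ψ τ hcomm (Multiplicative.ofAdd f) x = (psiI ψ τ i ^ (f i)) x := by
  induction f using Finsupp.induction with
  | zero => simp
  | single_add j a g hj ha ih =>
    rw [ofAdd_add, map_mul, Equiv.Perm.mul_apply, phi_single, ih]
    have hgx : (psiI ψ τ i ^ g i) x ∈ Set.Ioo (i : ℝ) (i + 1) :=
      ((psiI_fix hτ hsupp i).zpow _).mapsTo hx
    rcases eq_or_ne j i with rfl | hji
    · have hg : g j = 0 := Finsupp.notMem_support_iff.mp hj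
      rw [hg] at hgx ⊢
      simp only [zpow_zero, Equiv.Perm.one_apply, Finsupp.add_apply, Finsupp.single_eq_same, hg,
        add_zero]
    · rw [(psiI_fix hτ hsupp j).zpow a _
        (fun hmem => (ioo_disjoint hji).ne_of_mem hmem hgx rfl)]
      congr 1
      rw [Finsupp.add_apply, Finsupp.single_eq_of_ne' hji, zero_add]

/-- Powers of a nontrivial strictly monotone permutation don't fix a moved point. -/
lemma zpow_apply_ne (hmono : StrictMono ψ) {x0 : ℝ} (hx : ψ x0 ≠ x0)
    {a : ℤ} (ha : a ≠ 0) : (ψ ^ a) x0 ≠ x0 := by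
  have hposcase : ∀ (g : Equiv.Perm ℝ), StrictMono g → g x0 < x0 →
      ∀ b : ℤ, 0 < b → (g ^ b) x0 < x0 := by
    intro g hg hgx b hb
    have hnat : ∀ n : ℕ, (g ^ (n + 1)) x0 < x0 := by
      intro n
      induction n with
      | zero => simpa using hgx
      | succ n ih =>
        have h2 : (g ^ (n + 2)) x0 = g ((g ^ (n + 1)) x0) := by
          rw [pow_succ', Equiv.Perm.mul_apply]
        rw [h2]
        calc g ((g ^ (n + 1)) x0) ≤ g x0 := hg.monotone ih.le
        _ < x0 := hgx
    obtain ⟨n, rfl⟩ : ∃ n : ℕ, b = (n : ℤ) + 1 := ⟨(b - 1).toNat, by omega⟩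
    have h := hnat n
    rwa [show ((n : ℤ) + 1) = ((n + 1 : ℕ) : ℤ) by push_cast; ring, zpow_natCast]
  have hpos : ∀ b : ℤ, 0 < b → (ψ ^ b) x0 ≠ x0 := by
    intro b hb hbad
    rcases hx.lt_or_gt with hlt | hlt
    · exact (hposcase ψ hmono hlt b hb).ne hbad
    · have hmono' : StrictMono ⇑(ψ⁻¹ : Equiv.Perm ℝ) := by
        intro u v huv
        by_contra hcon
        push_neg at hcon
        have h2 := hmono.monotone hcon
        rw [Equiv.Perm.coe_inv, Equiv.apply_symm_apply, Equiv.apply_symm_apply] at h2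
        exact absurd h2 (not_le_of_gt huv)
      have h1 : (ψ⁻¹ : Equiv.Perm ℝ) x0 < x0 := by
        have := hmono' hlt
        rwa [Equiv.Perm.coe_inv, Equiv.symm_apply_apply] at this
      have h3 := hposcase ψ⁻¹ hmono' h1 b hb
      rw [show (ψ⁻¹ ^ b) x0 = (ψ⁻¹ ^ b) ((ψ ^ b) x0) by rw [hbad],
        ← Equiv.Perm.mul_apply, inv_zpow, inv_mul_cancel] at h3
      simp at h3
  rcases lt_trichotomy a 0 with hneg | rfl | hposa
  · intro hbad
    refine hpos (-a) (by omega) ?_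
    rw [show ((ψ ^ (-a)) x0 = x0) ↔ ((ψ ^ (-a)) ((ψ ^ a) x0) = x0) by rw [hbad],
      ← Equiv.Perm.mul_apply, ← zpow_add]
    simp
  · exact absurd rfl ha
  · exact hpos a hposa

end

/-- The subgroup of permutations fixing every integer. -/
def fixIntSub : Subgroup (Equiv.Perm ℝ) where
  carrier := {g | ∀ m : ℤ, g (m : ℝ) = (m : ℝ)}
  one_mem' := fun m => rfl
  mul_mem' := by
    intro g h hg hh m
    rw [Equiv.Perm.mul_apply, hh m, hg m]
  inv_mem' := by
    intro g hg m
    conv_lhs => rw [← hg m]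
    simp

lemma Ksub_le_fixInt {ψ τ : Equiv.Perm ℝ} (hτ : ∀ x, τ x = x + 1)
    (hsupp : {x : ℝ | ψ x ≠ x} ⊆ Set.Ioo 0 1) : Ksub ψ τ ≤ fixIntSub := by
  rw [Ksub, Subgroup.closure_le]
  rintro x ⟨i, rfl⟩ m
  exact psiI_fix hτ hsupp i _ (intCast_not_mem_ioo i m)

/-- Extensionality for monoid homs out of `Multiplicative (ℤ →₀ ℤ)`. -/
lemma mhom_ext {H : Type*} [Monoid H] {F G : Multiplicative (ℤ →₀ ℤ) →* H}
    (h : ∀ i a, F (Multiplicative.ofAdd (Finsupp.single i a)) =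
      G (Multiplicative.ofAdd (Finsupp.single i a))) : F = G := by
  apply MonoidHom.toAdditiveRight.injective
  apply Finsupp.addHom_ext
  intro i a
  simp only [MonoidHom.coe_toAdditiveRight, Function.comp_apply]
  rw [h i a]

/-- `lampAction` acts on single generators as a shift. -/
lemma lampAction_single (n i a : ℤ) :
    lampAction (Multiplicative.ofAdd n) (Multiplicative.ofAdd (Finsupp.single i a)) =
      Multiplicative.ofAdd (Finsupp.single (i + n) a) := by
  have hshift : ∀ j : ℤ, lampShift (Multiplicative.ofAdd (Finsupp.single j a)) =
      Multiplicative.ofAdd (Finsupp.single (j + 1) a) := by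
    intro j
    show Multiplicative.ofAdd ((Finsupp.domCongr (Equiv.addRight (1:ℤ))) (Finsupp.single j a)) = _
    rw [Finsupp.domCongr_apply, Finsupp.equivMapDomain_single]
    rfl
  have hshiftinv : ∀ j : ℤ, lampShift⁻¹ (Multiplicative.ofAdd (Finsupp.single j a)) =
      Multiplicative.ofAdd (Finsupp.single (j - 1) a) := by
    intro j
    have := hshift (j - 1)
    rw [sub_add_cancel] at this
    rw [← this]
    simp
  have key : ∀ m : ℤ, ∀ j : ℤ,
      (lampShift ^ m) (Multiplicative.ofAdd (Finsupp.single j a)) =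
        Multiplicative.ofAdd (Finsupp.single (j + m) a) := by
    intro m
    induction m using Int.induction_on with
    | zero => intro j; simp
    | succ k ih =>
      intro j
      rw [zpow_add_one, MulAut.mul_apply, hshift j, ih (j + 1)]
      congr 2
      ring
    | pred k ih =>
      intro j
      rw [show (-(k:ℤ) - 1) = (-(k:ℤ)) + (-1) by ring, zpow_add, MulAut.mul_apply,
        zpow_neg_one, hshiftinv j, ih (j - 1)]
      congr 2
      ring
  rw [show lampAction (Multiplicative.ofAdd n) = lampShift ^ n from rfl]
  exact key n i

end LampAux

/-- If `ψ ≠ 1` is an increasing homeomorphism of `ℝ` supported in `(0,1)` and `τ` is the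
translation by one, then `⟨ψ, τ⟩` is isomorphic to the lamplighter group `ℤ ≀ ℤ`. -/
theorem lamplighter_realization (ψ τ : Equiv.Perm ℝ)
    (hψmono : StrictMono ψ) (hψ : ψ ≠ 1) (hsupp : {x : ℝ | ψ x ≠ x} ⊆ Set.Ioo 0 1)
    (hτ : ∀ x, τ x = x + 1) :
    Nonempty ((Subgroup.closure {ψ, τ} : Subgroup (Equiv.Perm ℝ)) ≃* Lamplighter) := by
  classical
  have hcomm := LampAux.psiI_commute hτ hsupp
  set φ := LampAux.phiHom ψ τ hcomm with hφdef
  have hcompat : ∀ g : Multiplicative ℤ,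
      φ.comp (lampAction g).toMonoidHom =
        (MulAut.conj ((zpowersHom (Equiv.Perm ℝ) τ) g)).toMonoidHom.comp φ := by
    intro g
    apply LampAux.mhom_ext
    intro i a
    simp only [MonoidHom.comp_apply, MulEquiv.coe_toMonoidHom, MulAut.conj_apply,
      zpowersHom_apply]
    rw [show (lampAction g) (Multiplicative.ofAdd (Finsupp.single i a)) =
        Multiplicative.ofAdd (Finsupp.single (i + g.toAdd) a) from by
      conv_lhs => rw [← ofAdd_toAdd g]
      exact LampAux.lampAction_single _ i a]
    rw [hφdef, LampAux.phi_single, LampAux.phi_single, ← LampAux.psiI_conj, conj_zpow]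
  set Φ := SemidirectProduct.lift φ (zpowersHom (Equiv.Perm ℝ) τ) hcompat with hΦdef
  obtain ⟨x0, hx0⟩ : ∃ x0, ψ x0 ≠ x0 := by
    by_contra h
    push_neg at h
    exact hψ (Equiv.ext h)
  have hx01 : x0 ∈ Set.Ioo (0:ℝ) 1 := hsupp hx0
  -- injectivity
  have hinj : Function.Injective Φ := by
    rw [injective_iff_map_eq_one]
    intro x hxx
    rw [← SemidirectProduct.inl_left_mul_inr_right x, map_mul, SemidirectProduct.lift_inl,
      SemidirectProduct.lift_inr, zpowersHom_apply] at hxx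
    set n := x.right.toAdd with hndef
    -- first: n = 0
    have heval := congrArg (fun g : Equiv.Perm ℝ => g 0) hxx
    simp only [Equiv.Perm.mul_apply, Equiv.Perm.one_apply] at heval
    rw [LampAux.tau_zpow hτ n 0, zero_add] at heval
    have hfixn : φ x.left ((n : ℤ) : ℝ) = ((n : ℤ) : ℝ) :=
      LampAux.Ksub_le_fixInt hτ hsupp (LampAux.phi_mem ψ τ hcomm x.left) n
    rw [hfixn] at heval
    have hn0 : n = 0 := by exact_mod_cast heval
    have hright : x.right = 1 := by
      rw [← ofAdd_toAdd x.right, ← hndef, hn0, ofAdd_zero]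
    rw [hn0, zpow_zero, mul_one] at hxx
    -- now: x.left = 1
    have hleft : x.left = 1 := by
      rw [← ofAdd_toAdd x.left]
      rw [show (1 : Multiplicative (ℤ →₀ ℤ)) = Multiplicative.ofAdd 0 from rfl]
      congr 1
      ext i
      by_contra hne
      rw [Finsupp.coe_zero, Pi.zero_apply] at hne
      have hxmem : x0 + (i : ℝ) ∈ Set.Ioo (i : ℝ) (i + 1) :=
        ⟨by linarith [hx01.1], by linarith [hx01.2]⟩
      have happ := LampAux.phi_apply hτ hsupp hcomm x.left.toAdd i hxmem
      rw [ofAdd_toAdd, hxx, Equiv.Perm.one_apply, LampAux.psiI_zpow] at happ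
      have hτinv : ((τ ^ i)⁻¹ : Equiv.Perm ℝ) (x0 + i) = x0 := by
        apply (τ ^ i).injective
        rw [Equiv.Perm.coe_inv, Equiv.apply_symm_apply, LampAux.tau_zpow hτ]
      rw [Equiv.Perm.mul_apply, Equiv.Perm.mul_apply, hτinv, LampAux.tau_zpow hτ] at happ
      have : (ψ ^ (x.left.toAdd i)) x0 = x0 := by linarith [happ]
      exact LampAux.zpow_apply_ne hψmono hx0 hne this
    rw [← SemidirectProduct.inl_left_mul_inr_right x, hleft, hright]
    simp
  -- range
  have hψm : ψ ∈ Subgroup.closure {ψ, τ} := Subgroup.subset_closure (by simp)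
  have hτm : τ ∈ Subgroup.closure {ψ, τ} := Subgroup.subset_closure (by simp)
  have hrange : Φ.range = Subgroup.closure {ψ, τ} := by
    apply le_antisymm
    · rintro y ⟨x, rfl⟩
      rw [← SemidirectProduct.inl_left_mul_inr_right x, map_mul, SemidirectProduct.lift_inl,
        SemidirectProduct.lift_inr, zpowersHom_apply]
      apply mul_mem
      · have h1 : LampAux.Ksub ψ τ ≤ Subgroup.closure {ψ, τ} := by
          rw [LampAux.Ksub, Subgroup.closure_le]
          rintro z ⟨i, rfl⟩
          exact mul_mem (mul_mem (zpow_mem hτm i) hψm) (inv_mem (zpow_mem hτm i))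
        exact h1 (LampAux.phi_mem ψ τ hcomm x.left)
      · exact zpow_mem hτm _
    · rw [Subgroup.closure_le]
      rintro x (rfl | rfl)
      · refine ⟨SemidirectProduct.inl (Multiplicative.ofAdd (Finsupp.single 0 1)), ?_⟩
        rw [hΦdef, SemidirectProduct.lift_inl, hφdef, LampAux.phi_single]
        simp [LampAux.psiI]
      · refine ⟨SemidirectProduct.inr (Multiplicative.ofAdd 1), ?_⟩
        rw [hΦdef, SemidirectProduct.lift_inr, zpowersHom_apply]
        simp
  exact ⟨(MulEquiv.subgroupCongr hrange.symm).trans (MonoidHom.ofInjective hinj).symm⟩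
end

section
/- Every countable left-orderable group embeds into the group Homeo⁺(ℝ) of orientation-preserving homeomorphisms of the real line. -/
/-! Auxiliary: extension of order automorphisms of `ℚ` to `ℝ` via suprema of cuts. -/

noncomputable def ratExt (f : ℚ ≃o ℚ) (x : ℝ) : ℝ :=
  sSup ((fun q : ℚ => ((f q : ℚ) : ℝ)) '' {q : ℚ | (q : ℝ) < x})

lemma ratExt_set_nonempty (f : ℚ ≃o ℚ) (x : ℝ) :
    ((fun q : ℚ => ((f q : ℚ) : ℝ)) '' {q : ℚ | (q : ℝ) < x}).Nonempty := by
  obtain ⟨q, hq⟩ := exists_rat_lt x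
  exact ⟨_, ⟨q, hq, rfl⟩⟩

lemma ratExt_set_bddAbove (f : ℚ ≃o ℚ) (x : ℝ) :
    BddAbove ((fun q : ℚ => ((f q : ℚ) : ℝ)) '' {q : ℚ | (q : ℝ) < x}) := by
  obtain ⟨q₀, hq₀⟩ := exists_rat_gt x
  refine ⟨(f q₀ : ℝ), ?_⟩
  rintro y ⟨p, hp, rfl⟩
  have hpq : p < q₀ := by exact_mod_cast lt_trans hp hq₀
  show ((f p : ℚ) : ℝ) ≤ ((f q₀ : ℚ) : ℝ)
  exact_mod_cast (f.strictMono hpq).le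

lemma le_ratExt (f : ℚ ≃o ℚ) {x : ℝ} {q : ℚ} (hq : (q : ℝ) < x) :
    (f q : ℝ) ≤ ratExt f x :=
  le_csSup (ratExt_set_bddAbove f x) ⟨q, hq, rfl⟩

lemma lt_ratExt (f : ℚ ≃o ℚ) {x : ℝ} {q : ℚ} (hq : (q : ℝ) < x) :
    (f q : ℝ) < ratExt f x := by
  obtain ⟨q', hq1, hq2⟩ := exists_rat_btwn hq
  have h1 : q < q' := by exact_mod_cast hq1
  calc (f q : ℝ) < (f q' : ℝ) := by exact_mod_cast f.strictMono h1
    _ ≤ ratExt f x := le_ratExt f hq2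

lemma ratExt_le (f : ℚ ≃o ℚ) {x : ℝ} {y : ℝ}
    (h : ∀ q : ℚ, (q : ℝ) < x → (f q : ℝ) ≤ y) : ratExt f x ≤ y := by
  refine csSup_le (ratExt_set_nonempty f x) ?_
  rintro z ⟨p, hp, rfl⟩
  exact h p hp

lemma ratExt_rat (f : ℚ ≃o ℚ) (q₀ : ℚ) : ratExt f (q₀ : ℝ) = (f q₀ : ℝ) := by
  refine le_antisymm ?_ ?_
  · refine ratExt_le f fun q hq => ?_
    have : q < q₀ := by exact_mod_cast hq
    exact_mod_cast (f.strictMono this).le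
  · refine le_of_forall_lt fun y hy => ?_
    obtain ⟨r, hr1, hr2⟩ := exists_rat_btwn hy
    have hr2' : r < f q₀ := by exact_mod_cast hr2
    have hsym : f.symm r < q₀ := by
      have := f.symm.strictMono hr2'
      simpa using this
    have : (f (f.symm r) : ℝ) ≤ ratExt f (q₀ : ℝ) :=
      le_ratExt f (by exact_mod_cast hsym)
    rw [f.apply_symm_apply] at this
    exact lt_of_lt_of_le hr1 this

lemma ratExt_congr {f f' : ℚ ≃o ℚ} (h : ∀ q, f q = f' q) (x : ℝ) :
    ratExt f x = ratExt f' x := by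
  unfold ratExt
  have : (fun q : ℚ => ((f q : ℚ) : ℝ)) = fun q : ℚ => ((f' q : ℚ) : ℝ) :=
    funext fun q => by rw [h]
  rw [this]

lemma ratExt_id (x : ℝ) : ratExt (OrderIso.refl ℚ) x = x := by
  refine le_antisymm ?_ ?_
  · exact ratExt_le _ fun q hq => le_of_lt (by simpa using hq)
  · refine le_of_forall_lt fun y hy => ?_
    obtain ⟨r, hr1, hr2⟩ := exists_rat_btwn hy
    have : ((OrderIso.refl ℚ) r : ℝ) ≤ ratExt (OrderIso.refl ℚ) x := le_ratExt _ hr2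
    simp only [OrderIso.refl_apply] at this
    exact lt_of_lt_of_le hr1 this

lemma ratExt_comp (f g : ℚ ≃o ℚ) (x : ℝ) :
    ratExt f (ratExt g x) = ratExt (g.trans f) x := by
  refine le_antisymm ?_ ?_
  · refine ratExt_le f fun p hp => ?_
    obtain ⟨b, ⟨q, hq, rfl⟩, hpb⟩ :=
      exists_lt_of_lt_csSup (ratExt_set_nonempty g x) hp
    have hpb' : (p : ℝ) < ((g q : ℚ) : ℝ) := hpb
    have hpq : p < g q := by exact_mod_cast hpb'
    have : f p ≤ (g.trans f) q := (f.strictMono hpq).le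
    calc (f p : ℝ) ≤ ((g.trans f) q : ℝ) := by exact_mod_cast this
      _ ≤ ratExt (g.trans f) x := le_ratExt _ hq
  · refine ratExt_le (g.trans f) fun q hq => ?_
    have h1 : (g q : ℝ) < ratExt g x := lt_ratExt g hq
    exact le_ratExt f h1

lemma ratExt_strictMono (f : ℚ ≃o ℚ) : StrictMono (ratExt f) := by
  intro x y hxy
  obtain ⟨q, hq1, hq2⟩ := exists_rat_btwn hxy
  obtain ⟨q', hq1', hq2'⟩ := exists_rat_btwn hq2
  have hqq' : q < q' := by exact_mod_cast hq1'
  have h1 : ratExt f x ≤ (f q : ℝ) := by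
    refine ratExt_le f fun p hp => ?_
    have : p < q := by exact_mod_cast lt_trans hp hq1
    exact_mod_cast (f.strictMono this).le
  have h2 : (f q : ℝ) < (f q' : ℝ) := by exact_mod_cast f.strictMono hqq'
  have h3 : (f q' : ℝ) ≤ ratExt f y := le_ratExt f hq2'
  exact lt_of_le_of_lt h1 (lt_of_lt_of_le h2 h3)

section Lex

variable {G : Type*} [Group G] [LinearOrder G]

/-- Left multiplication action on `G ×ₗ ℚ` as an order isomorphism. -/
def lexAct (hmul : ∀ g : G, StrictMono (fun h => g * h)) (g : G) :
    (G ×ₗ ℚ) ≃o (G ×ₗ ℚ) where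
  toFun p := toLex (g * (ofLex p).1, (ofLex p).2)
  invFun p := toLex (g⁻¹ * (ofLex p).1, (ofLex p).2)
  left_inv p := by simp
  right_inv p := by simp
  map_rel_iff' {a b} := by
    show (toLex (g * (ofLex a).1, (ofLex a).2) : G ×ₗ ℚ) ≤
        toLex (g * (ofLex b).1, (ofLex b).2) ↔ a ≤ b
    rw [show (toLex (g * (ofLex a).1, (ofLex a).2) : G ×ₗ ℚ) ≤
        toLex (g * (ofLex b).1, (ofLex b).2) ↔ _ from Prod.Lex.le_iff,
      show a ≤ b ↔ _ from Prod.Lex.le_iff]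
    simp [(hmul g).lt_iff_lt, (hmul g).injective.eq_iff]

lemma lexAct_apply (hmul : ∀ g : G, StrictMono (fun h => g * h)) (g : G) (p : G ×ₗ ℚ) :
    lexAct hmul g p = toLex (g * (ofLex p).1, (ofLex p).2) := rfl

end Lex

theorem aux_embed {G : Type*} [Group G] [LinearOrder G] [Countable G]
    (hmul : ∀ g : G, StrictMono (fun h => g * h)) :
    ∃ φ : G →* Equiv.Perm ℝ, Function.Injective φ ∧ ∀ g : G, StrictMono (φ g) := by
  haveI : Countable (G ×ₗ ℚ) := inferInstanceAs (Countable (G × ℚ))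
  haveI : Nonempty (G ×ₗ ℚ) := ⟨toLex (1, 0)⟩
  haveI : DenselyOrdered (G ×ₗ ℚ) := by
    constructor
    intro a b hab
    rcases Prod.Lex.lt_iff.1 hab with h1 | ⟨h1, h2⟩
    · refine ⟨toLex ((ofLex a).1, (ofLex a).2 + 1), ?_, ?_⟩
      · exact Prod.Lex.lt_iff.2 (Or.inr ⟨rfl, lt_add_one _⟩)
      · exact Prod.Lex.lt_iff.2 (Or.inl h1)
    · obtain ⟨c, hc1, hc2⟩ := exists_between h2
      exact ⟨toLex ((ofLex a).1, c), Prod.Lex.lt_iff.2 (Or.inr ⟨rfl, hc1⟩),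
        Prod.Lex.lt_iff.2 (Or.inr ⟨h1, hc2⟩)⟩
  haveI : NoMaxOrder (G ×ₗ ℚ) := by
    constructor
    intro a
    exact ⟨toLex ((ofLex a).1, (ofLex a).2 + 1),
      Prod.Lex.lt_iff.2 (Or.inr ⟨rfl, lt_add_one _⟩)⟩
  haveI : NoMinOrder (G ×ₗ ℚ) := by
    constructor
    intro a
    refine ⟨toLex ((ofLex a).1, (ofLex a).2 - 1),
      Prod.Lex.lt_iff.2 (Or.inr ⟨rfl, ?_⟩)⟩
    exact sub_one_lt _
  obtain ⟨e⟩ := Order.iso_of_countable_dense (G ×ₗ ℚ) ℚ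
  set f : G → ℚ ≃o ℚ := fun g => (e.symm.trans (lexAct hmul g)).trans e with hf
  have hfmul : ∀ (g h : G) (q : ℚ), f (g * h) q = f g (f h q) := by
    intro g h q
    simp only [hf, OrderIso.trans_apply, OrderIso.symm_apply_apply]
    rw [lexAct_apply, lexAct_apply, lexAct_apply]
    simp [mul_assoc]
  have hfone : ∀ q : ℚ, f 1 q = q := by
    intro q
    simp only [hf, OrderIso.trans_apply]
    rw [lexAct_apply]
    simp
  have hinv : ∀ (g : G) (x : ℝ), ratExt (f g⁻¹) (ratExt (f g) x) = x := by
    intro g x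
    rw [ratExt_comp]
    have : ∀ q, ((f g).trans (f g⁻¹)) q = (OrderIso.refl ℚ) q := by
      intro q
      simp only [OrderIso.trans_apply, OrderIso.refl_apply]
      rw [← hfmul, inv_mul_cancel, hfone]
    rw [ratExt_congr this, ratExt_id]
  let Φ : G → Equiv.Perm ℝ := fun g =>
    { toFun := ratExt (f g)
      invFun := ratExt (f g⁻¹)
      left_inv := fun x => hinv g x
      right_inv := fun x => by
        have := hinv g⁻¹ x
        rwa [inv_inv] at this }
  have hΦ_apply : ∀ (g : G) (x : ℝ), Φ g x = ratExt (f g) x := fun _ _ => rfl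
  have hΦmul : ∀ g h : G, Φ (g * h) = Φ g * Φ h := by
    intro g h
    ext x
    rw [Equiv.Perm.mul_apply, hΦ_apply, hΦ_apply, hΦ_apply, ratExt_comp]
    exact ratExt_congr (fun q => (hfmul g h q).trans rfl) x
  refine ⟨MonoidHom.mk' Φ hΦmul, ?_, ?_⟩
  · rw [injective_iff_map_eq_one]
    intro g hg
    have hq : ∀ q : ℚ, f g q = q := by
      intro q
      have h1 : Φ g (q : ℝ) = (q : ℝ) := by
        rw [show Φ g = 1 from hg]; rfl
      rw [hΦ_apply, ratExt_rat] at h1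
      exact_mod_cast h1
    have h2 := hq (e (toLex (1, 0)))
    simp only [hf, OrderIso.trans_apply, OrderIso.symm_apply_apply] at h2
    rw [lexAct_apply] at h2
    have h3 : (toLex (g * (ofLex (toLex ((1 : G), (0 : ℚ)))).1,
        (ofLex (toLex ((1 : G), (0 : ℚ)))).2) : G ×ₗ ℚ) = toLex (1, 0) :=
      e.injective h2
    simp only [ofLex_toLex] at h3
    have h4 : g * 1 = 1 := congrArg (fun p : G ×ₗ ℚ => (ofLex p).1) h3
    rwa [mul_one] at h4
  · intro g
    exact ratExt_strictMono (f g)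

/-- A group is left orderable if it admits a strict total order invariant under
left multiplication. -/
def IsLeftOrderable (G : Type*) [Group G] : Prop :=
  ∃ r : G → G → Prop, IsStrictTotalOrder G r ∧ ∀ g h₁ h₂ : G, r h₁ h₂ → r (g * h₁) (g * h₂)

/-- Every countable left-orderable group embeds into `Homeo⁺(ℝ)`, realized as the group
of strictly increasing bijections of `ℝ` (these are automatically homeomorphisms). -/
theorem countable_leftOrderable_embeds_in_homeoR (G : Type*) [Group G] [Countable G]
    (hG : IsLeftOrderable G) :
    ∃ φ : G →* Equiv.Perm ℝ, Function.Injective φ ∧ ∀ g : G, StrictMono (φ g) := by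
  obtain ⟨r, hr, hinv⟩ := hG
  haveI := hr
  letI : DecidableRel r := Classical.decRel r
  letI : LinearOrder G := linearOrderOfSTO r
  have hmul : ∀ g : G, StrictMono (fun h => g * h) := by
    intro g a b hab
    exact hinv g a b hab
  exact aux_embed hmul
end
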